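/- Let V be a d-dimensional linear subspace of the space of r × r matrices over F₂. Then there exists a subset T of GL_r(2) with |T| ≤ d + 2 such that V is contained in the F₂-span of T. -/

import Mathlib

open Module Submodule Finset

private abbrev MatF2 (r : ℕ) := Matrix (Fin r) (Fin r) (ZMod 2)

section CharTwoHelpers

variable {r : ℕ}

private lemma mat_add_self (x : MatF2 r) : x + x = 0 := by
  ext i j
  exact CharTwo.add_self_eq_zero _

private lemma mat_cancel (x y : MatF2 r) : x + (x + y) = y := by
  rw [← add_assoc, mat_add_self, zero_add]

private lemma mat_sub_eq_add (x y : MatF2 r) : x - y = x + y := by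
  rw [sub_eq_add_neg]
  congr 1
  ext i j
  exact CharTwo.neg_eq _

end CharTwoHelpers

private lemma prod_gl_pos (r : ℕ) : 0 < ∏ i ∈ Finset.range r, (2 ^ r - 2 ^ i) := by
  apply Finset.prod_pos
  intro i hi
  have : (2:ℕ) ^ i < 2 ^ r := Nat.pow_lt_pow_right one_lt_two (Finset.mem_range.mp hi)
  omega

private lemma key_ineq (r : ℕ) :
    2 ^ (r * r) * (2 ^ r + 2) ≤ 2 ^ (r + 2) * ∏ i ∈ Finset.range r, (2 ^ r - 2 ^ i) := by
  induction r with
  | zero => norm_num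
  | succ n ih =>
    rcases Nat.eq_zero_or_pos n with rfl | hn
    · norm_num
    have hone : (1:ℕ) ≤ 2 ^ n := Nat.one_le_two_pow
    have hprod : ∏ i ∈ Finset.range (n + 1), (2 ^ (n + 1) - 2 ^ i)
        = ((∏ i ∈ Finset.range n, (2 ^ n - 2 ^ i)) * 2 ^ n) * (2 ^ (n + 1) - 1) := by
      rw [Finset.prod_range_succ' (fun i => 2 ^ (n + 1) - 2 ^ i)]
      congr 1
      · calc ∏ i ∈ Finset.range n, (2 ^ (n + 1) - 2 ^ (i + 1))
            = ∏ i ∈ Finset.range n, ((2 ^ n - 2 ^ i) * 2) := by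
              apply Finset.prod_congr rfl
              intro i _
              have h1 : (2:ℕ) ^ (n + 1) = 2 ^ n * 2 := by rw [pow_succ]
              have h2 : (2:ℕ) ^ (i + 1) = 2 ^ i * 2 := by rw [pow_succ]
              rw [h1, h2, ← Nat.sub_mul]
          _ = (∏ i ∈ Finset.range n, (2 ^ n - 2 ^ i)) * ∏ _i ∈ Finset.range n, (2:ℕ) :=
              Finset.prod_mul_distrib
          _ = (∏ i ∈ Finset.range n, (2 ^ n - 2 ^ i)) * 2 ^ n := by
              simp [Finset.prod_const]
    rw [hprod]
    have hPpos : 0 < ∏ i ∈ Finset.range n, (2 ^ n - 2 ^ i) := prod_gl_pos n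
    have ha : 2 ≤ (2:ℕ) ^ n := by
      calc (2:ℕ) = 2 ^ 1 := (pow_one 2).symm
      _ ≤ 2 ^ n := Nat.pow_le_pow_right (by norm_num) hn
    have e1 : (2:ℕ) ^ ((n + 1) * (n + 1)) = 2 ^ (n * n) * 2 ^ n * 2 ^ n * 2 := by
      rw [show (n + 1) * (n + 1) = n * n + n + n + 1 by ring, pow_succ, pow_add, pow_add]
    have e2 : (2:ℕ) ^ (n + 1) = 2 * 2 ^ n := by rw [pow_succ]; ring
    have e3 : (2:ℕ) ^ (n + 1 + 2) = 8 * 2 ^ n := by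
      rw [show n + 1 + 2 = n + 3 by ring, pow_add]
      norm_num
      ring
    have ih4 : 2 ^ (n * n) * (2 ^ n + 2) ≤ 4 * 2 ^ n * ∏ i ∈ Finset.range n, (2 ^ n - 2 ^ i) := by
      have e4 : (2:ℕ) ^ (n + 2) = 4 * 2 ^ n := by rw [pow_add]; norm_num; ring
      rw [← e4]
      exact ih
    rw [e1, e2, e3]
    obtain ⟨c, hc⟩ : ∃ c, 2 * (2:ℕ) ^ n = c + 1 := ⟨2 * 2 ^ n - 1, by omega⟩
    rw [show 2 * 2 ^ n - 1 = c from by omega]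
    have key : 2 ^ n * (2 * 2 ^ n + 2) ≤ (2 ^ n + 2) * c := by nlinarith [hc, ha]
    calc 2 ^ (n * n) * 2 ^ n * 2 ^ n * 2 * (2 * 2 ^ n + 2)
        = (2 ^ n * (2 * 2 ^ n + 2)) * (2 * 2 ^ (n * n) * 2 ^ n) := by ring
      _ ≤ ((2 ^ n + 2) * c) * (2 * 2 ^ (n * n) * 2 ^ n) := Nat.mul_le_mul_right _ key
      _ = (2 ^ (n * n) * (2 ^ n + 2)) * (2 * 2 ^ n * c) := by ring
      _ ≤ (4 * 2 ^ n * ∏ i ∈ Finset.range n, (2 ^ n - 2 ^ i)) * (2 * 2 ^ n * c) :=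
          Nat.mul_le_mul_right _ ih4
      _ = 8 * 2 ^ n * ((∏ i ∈ Finset.range n, (2 ^ n - 2 ^ i)) * 2 ^ n * c) := by ring

/-- The number of invertible `r × r` matrices over `𝔽₂` exceeds `2 ^ (r² - 2)`. -/
private lemma card_units_lower (r : ℕ) :
    2 ^ (r * r) < 4 * Nat.card {x : MatF2 r // IsUnit x} := by
  haveI : Fact (Nat.Prime 2) := ⟨Nat.prime_two⟩
  have hcard : Nat.card {x : MatF2 r // IsUnit x}
      = ∏ i ∈ Finset.range r, (2 ^ r - 2 ^ i) := by
    have e : (MatF2 r)ˣ ≃ {x : MatF2 r // IsUnit x} :=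
      { toFun := fun u => ⟨(u : MatF2 r), u.isUnit⟩
        invFun := fun x => x.2.unit
        left_inv := fun u => IsUnit.unit_of_val_units _
        right_inv := fun x => Subtype.ext x.2.unit_spec }
    rw [← Nat.card_congr e]
    have hGL := Matrix.card_GL_field (𝔽 := ZMod 2) (n := r)
    rw [ZMod.card 2] at hGL
    rw [show ((MatF2 r)ˣ) = GL (Fin r) (ZMod 2) from rfl, hGL]
    exact Fin.prod_univ_eq_prod_range (fun i => 2 ^ r - 2 ^ i) r
  rw [hcard]
  have h1 := key_ineq r
  have h2 : 2 ^ (r * r) * 2 ^ r < 2 ^ (r * r) * (2 ^ r + 2) :=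
    mul_lt_mul_of_pos_left (by omega) (pow_pos (by norm_num) _)
  have h3 : 2 ^ (r + 2) * ∏ i ∈ Finset.range r, (2 ^ r - 2 ^ i)
      = (4 * ∏ i ∈ Finset.range r, (2 ^ r - 2 ^ i)) * 2 ^ r := by
    rw [pow_add]; ring
  have h4 : 2 ^ (r * r) * 2 ^ r < (4 * ∏ i ∈ Finset.range r, (2 ^ r - 2 ^ i)) * 2 ^ r :=
    lt_of_lt_of_le h2 (le_trans h1 (le_of_eq h3))
  exact lt_of_mul_lt_mul_right h4 (Nat.zero_le _)

/-- Every matrix over `𝔽₂` lies in the span of two invertible matrices. -/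
private lemma mem_span_pair_units (r : ℕ) (S : MatF2 r) :
    ∃ A B : MatF2 r,
      IsUnit A ∧ IsUnit B ∧ S ∈ Submodule.span (ZMod 2) ({A, B} : Set (MatF2 r)) := by
  classical
  by_cases hU : IsUnit S
  · exact ⟨S, S, hU, hU, Submodule.subset_span (by simp)⟩
  have hr : r ≠ 0 := by
    intro h
    subst h
    exact hU ((Matrix.isUnit_iff_isUnit_det S).mpr (by rw [Matrix.det_fin_zero]; exact isUnit_one))
  haveI : Fact (Nat.Prime 2) := ⟨Nat.prime_two⟩
  set K := GaloisField 2 r with hK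
  haveI : Fintype K := Fintype.ofFinite K
  have hrk : Module.finrank (ZMod 2) K = r := GaloisField.finrank 2 hr
  let b : Basis (Fin r) (ZMod 2) K := (Module.finBasis (ZMod 2) K).reindex (finCongr hrk)
  let e : (K →ₗ[ZMod 2] K) ≃ₐ[ZMod 2] MatF2 r :=
    LinearMap.toMatrixAlgEquiv b
  set s : K →ₗ[ZMod 2] K := e.symm S with hs
  -- pigeonhole: some α is not of the form s x / x
  obtain ⟨α, hα⟩ : ∃ α : K, ∀ x : K, x ≠ 0 → s x ≠ α * x := by
    by_contra hcon
    push_neg at hcon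
    have hsurj : Function.Surjective (fun x : {x : K // x ≠ 0} => s x.val * (x.val)⁻¹) := by
      intro α
      obtain ⟨x, hx0, hx⟩ := hcon α
      refine ⟨⟨x, hx0⟩, ?_⟩
      simp only [hx]
      exact mul_inv_cancel_right₀ hx0 α
    have h1 : Fintype.card K ≤ Fintype.card {x : K // x ≠ 0} :=
      Fintype.card_le_of_surjective _ hsurj
    have h2 : Fintype.card {x : K // x ≠ 0} < Fintype.card K := by
      apply Fintype.card_lt_of_injective_of_notMem (fun x : {x : K // x ≠ 0} => x.val)
        Subtype.coe_injective (b := 0)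
      rintro ⟨⟨x, hx⟩, hx0⟩
      exact hx hx0
    omega
  -- s + mulLeft α is invertible
  have hker : ∀ (f : K →ₗ[ZMod 2] K), (∀ x : K, x ≠ 0 → f x ≠ 0) → IsUnit f := by
    intro f hf
    rw [LinearMap.isUnit_iff_ker_eq_bot, LinearMap.ker_eq_bot']
    intro m hm
    by_contra hm0
    exact hf m hm0 hm
  have htu : IsUnit (s + LinearMap.mulLeft (ZMod 2) α) := by
    apply hker
    intro x hx0 hx
    apply hα x hx0
    have h1 : s x + α * x = 0 := by
      simpa [LinearMap.mulLeft_apply] using hx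
    have h2 : s x = -(α * x) := by linear_combination h1
    rw [h2, CharTwo.neg_eq]
  have hαne : α ≠ 0 := by
    intro h
    subst h
    rw [LinearMap.mulLeft_zero_eq_zero, add_zero] at htu
    apply hU
    have hSe : S = e s := by rw [hs, AlgEquiv.apply_symm_apply]
    rw [hSe]
    exact htu.map e
  have hmu : IsUnit (LinearMap.mulLeft (ZMod 2) α) := by
    apply hker
    intro x hx0 hx
    rw [LinearMap.mulLeft_apply] at hx
    rcases mul_eq_zero.mp hx with h | h
    · exact hαne h
    · exact hx0 h
  refine ⟨e (LinearMap.mulLeft (ZMod 2) α), S + e (LinearMap.mulLeft (ZMod 2) α), hmu.map e, ?_, ?_⟩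
  · have hBe : S + e (LinearMap.mulLeft (ZMod 2) α) = e (s + LinearMap.mulLeft (ZMod 2) α) := by
      rw [map_add, hs, AlgEquiv.apply_symm_apply]
    rw [hBe]
    exact htu.map e
  · set A := e (LinearMap.mulLeft (ZMod 2) α) with hA
    have hS : S = A + (S + A) := by
      rw [add_comm S A, mat_cancel]
    have hmem : A + (S + A) ∈ Submodule.span (ZMod 2) ({A, S + A} : Set (MatF2 r)) :=
      Submodule.add_mem _ (Submodule.subset_span (by simp)) (Submodule.subset_span (by simp))
    rwa [← hS] at hmem

/-- Fiber bound: if no shift works, each coset of `V` contains at most `2 ^ (d - 2)` units. -/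
private lemma fiber_bound (r d : ℕ) (V : Submodule (ZMod 2) (MatF2 r))
    (hV : Module.finrank (ZMod 2) V = d)
    (hlt : ∀ S : MatF2 r,
      Submodule.span (ZMod 2) {g | g ∈ V ∧ IsUnit (S + g)} < V)
    (z : MatF2 r ⧸ V) (fib : Finset (MatF2 r))
    (hfibmem : ∀ b ∈ fib, IsUnit b ∧ V.mkQ b = z) :
    4 * fib.card ≤ 2 ^ d := by
  classical
  by_cases hne : fib.Nonempty
  swap
  · rw [Finset.not_nonempty_iff_eq_empty] at hne
    rw [hne]
    simp
  obtain ⟨b₀, hb₀⟩ := hne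
  obtain ⟨hb₀u, hb₀z⟩ := hfibmem b₀ hb₀
  obtain ⟨v', hv'V, hv'W⟩ := SetLike.exists_of_lt (hlt b₀)
  -- basic membership fact
  have hbV : ∀ b : MatF2 r, IsUnit b → V.mkQ b = z → b₀ + b ∈ V := by
    intro b _ hbz
    have h1 : V.mkQ b₀ = V.mkQ b := by rw [hb₀z, hbz]
    rw [Submodule.mkQ_apply, Submodule.mkQ_apply, Submodule.Quotient.eq] at h1
    rwa [mat_sub_eq_add] at h1
  -- v' is in the span for shift b₀ + v'
  have hv'W' : v' ∈ Submodule.span (ZMod 2) {g | g ∈ V ∧ IsUnit (b₀ + v' + g)} := by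
    apply Submodule.subset_span
    refine ⟨hv'V, ?_⟩
    rw [add_assoc, mat_add_self, add_zero]
    exact hb₀u
  -- each coset difference is in the span for shift b₀ + v'
  have hDW' : ∀ b : MatF2 r, IsUnit b → V.mkQ b = z →
      b₀ + b ∈ Submodule.span (ZMod 2) {g | g ∈ V ∧ IsUnit (b₀ + v' + g)} := by
    intro b hbu hbz
    have h1 : v' + (b₀ + b) ∈ Submodule.span (ZMod 2) {g | g ∈ V ∧ IsUnit (b₀ + v' + g)} := by
      apply Submodule.subset_span
      refine ⟨Submodule.add_mem _ hv'V (hbV b hbu hbz), ?_⟩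
      have h2 : b₀ + v' + (v' + (b₀ + b)) = b := by
        rw [add_assoc, mat_cancel, mat_cancel]
      rw [h2]
      exact hbu
    have h3 : b₀ + b = v' + (v' + (b₀ + b)) := (mat_cancel v' _).symm
    rw [h3]
    exact Submodule.add_mem _ hv'W' h1
  -- each coset difference is in the span for shift b₀
  have hDW : ∀ b : MatF2 r, IsUnit b → V.mkQ b = z →
      b₀ + b ∈ Submodule.span (ZMod 2) {g | g ∈ V ∧ IsUnit (b₀ + g)} := by
    intro b hbu hbz
    apply Submodule.subset_span
    refine ⟨hbV b hbu hbz, ?_⟩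
    rw [mat_cancel]
    exact hbu
  -- the span D of coset differences
  set D := Submodule.span (ZMod 2)
    {x : MatF2 r | ∃ b : MatF2 r, IsUnit b ∧ V.mkQ b = z ∧ x = b₀ + b} with hD
  have hDleW : D ≤ Submodule.span (ZMod 2) {g | g ∈ V ∧ IsUnit (b₀ + g)} := by
    rw [hD, Submodule.span_le]
    rintro x ⟨b, hbu, hbz, rfl⟩
    exact hDW b hbu hbz
  have hDleW' : D ≤ Submodule.span (ZMod 2) {g | g ∈ V ∧ IsUnit (b₀ + v' + g)} := by
    rw [hD, Submodule.span_le]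
    rintro x ⟨b, hbu, hbz, rfl⟩
    exact hDW' b hbu hbz
  have hv'D : v' ∉ D := fun h => hv'W (hDleW h)
  have hDlt : D < Submodule.span (ZMod 2) {g | g ∈ V ∧ IsUnit (b₀ + v' + g)} := by
    apply lt_of_le_of_ne hDleW'
    intro h
    rw [h] at hv'D
    exact hv'D hv'W'
  have h1 : Module.finrank (ZMod 2) D
      < Module.finrank (ZMod 2) (Submodule.span (ZMod 2) {g | g ∈ V ∧ IsUnit (b₀ + v' + g)}) :=
    Submodule.finrank_lt_finrank_of_lt hDlt
  have h2 : Module.finrank (ZMod 2) (Submodule.span (ZMod 2) {g | g ∈ V ∧ IsUnit (b₀ + v' + g)})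
      < d := by
    rw [← hV]
    exact Submodule.finrank_lt_finrank_of_lt (hlt (b₀ + v'))
  -- card bound via injection into D
  have hcard : fib.card ≤ Fintype.card D := by
    have himg : fib.image (fun b => b₀ + b) ⊆ (D : Set (MatF2 r)).toFinset := by
      intro x hx
      obtain ⟨b, hb, rfl⟩ := Finset.mem_image.mp hx
      obtain ⟨hbu, hbz⟩ := hfibmem b hb
      rw [Set.mem_toFinset]
      exact Submodule.subset_span ⟨b, hbu, hbz, rfl⟩
    calc fib.card = (fib.image (fun b => b₀ + b)).card :=
          (Finset.card_image_of_injective fib (add_right_injective b₀)).symm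
      _ ≤ (D : Set (MatF2 r)).toFinset.card := Finset.card_le_card himg
      _ = Fintype.card D := by simp [Set.toFinset_card]
  have hcardD : Fintype.card D = 2 ^ Module.finrank (ZMod 2) D := by
    rw [card_eq_pow_finrank (K := ZMod 2) (V := D), ZMod.card 2]
  calc 4 * fib.card ≤ 4 * 2 ^ Module.finrank (ZMod 2) D := by
        rw [← hcardD]
        exact Nat.mul_le_mul_left _ hcard
    _ = 2 ^ (Module.finrank (ZMod 2) D + 2) := by rw [pow_add]; ring
    _ ≤ 2 ^ d := Nat.pow_le_pow_right (by norm_num) (by omega)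

/-- There is a shift `S` such that the units in `S + V` span `V`. -/
private lemma exists_good_shift (r d : ℕ)
    (V : Submodule (ZMod 2) (MatF2 r))
    (hV : Module.finrank (ZMod 2) V = d) :
    ∃ S : MatF2 r,
      V ≤ Submodule.span (ZMod 2) {g | g ∈ V ∧ IsUnit (S + g)} := by
  classical
  by_contra hcon
  push_neg at hcon
  have hlt : ∀ S : MatF2 r,
      Submodule.span (ZMod 2) {g | g ∈ V ∧ IsUnit (S + g)} < V := by
    intro S
    refine lt_of_le_of_ne ?_ ?_
    · rw [Submodule.span_le]
      exact fun g hg => hg.1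
    · intro h
      exact hcon S h.ge
  -- count units fiberwise over the quotient
  set 𝒰 := Finset.univ.filter (fun x : MatF2 r => IsUnit x) with h𝒰
  have hfiber : 𝒰.card = ∑ z ∈ (Finset.univ : Finset (MatF2 r ⧸ V)),
      (𝒰.filter (fun u => V.mkQ u = z)).card :=
    Finset.card_eq_sum_card_fiberwise (fun x _ => Finset.mem_univ _)
  have hbound : ∀ z : MatF2 r ⧸ V, 4 * (𝒰.filter (fun u => V.mkQ u = z)).card ≤ 2 ^ d := by
    intro z
    apply fiber_bound r d V hV hlt z
    intro b hb
    rw [Finset.mem_filter] at hb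
    obtain ⟨hb1, hb2⟩ := hb
    rw [h𝒰, Finset.mem_filter] at hb1
    exact ⟨hb1.2, hb2⟩
  have htotal : 4 * 𝒰.card ≤ Fintype.card (MatF2 r ⧸ V) * 2 ^ d := by
    rw [hfiber, Finset.mul_sum]
    calc ∑ z ∈ (Finset.univ : Finset (MatF2 r ⧸ V)), 4 * (𝒰.filter (fun u => V.mkQ u = z)).card
        ≤ ∑ _z ∈ (Finset.univ : Finset (MatF2 r ⧸ V)), 2 ^ d :=
          Finset.sum_le_sum (fun z _ => hbound z)
      _ = Fintype.card (MatF2 r ⧸ V) * 2 ^ d := by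
          rw [Finset.sum_const, Finset.card_univ, smul_eq_mul]
  -- cardinalities
  have hcardV : Fintype.card V = 2 ^ d := by
    rw [card_eq_pow_finrank (K := ZMod 2) (V := V), ZMod.card 2, hV]
  have hcardM : Fintype.card (MatF2 r) = 2 ^ (r * r) := by
    rw [card_eq_pow_finrank (K := ZMod 2) (V := MatF2 r), ZMod.card 2]
    congr 1
    rw [Module.finrank_matrix]
    simp
  have hquot : Fintype.card (MatF2 r) = Fintype.card V * Fintype.card (MatF2 r ⧸ V) := by
    have h := Submodule.card_eq_card_quotient_mul_card V
    simpa [Nat.card_eq_fintype_card] using h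
  have hunits : Nat.card {x : MatF2 r // IsUnit x} = 𝒰.card := by
    rw [Nat.card_eq_fintype_card, h𝒰, Fintype.card_subtype]
  have hlower := card_units_lower r
  rw [hunits] at hlower
  have hfinal : Fintype.card (MatF2 r ⧸ V) * 2 ^ d = 2 ^ (r * r) := by
    rw [← hcardM, hquot, hcardV]
    ring
  omega

/-- Any `d`-dimensional subspace of `M_r(𝔽₂)` is contained in the span of at most `d + 2`
invertible matrices. -/
theorem stmt_6 (r d : ℕ) (V : Submodule (ZMod 2) (Matrix (Fin r) (Fin r) (ZMod 2)))
    (hV : Module.finrank (ZMod 2) V = d) :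
    ∃ T : Finset (Matrix (Fin r) (Fin r) (ZMod 2)),
      (∀ M ∈ T, IsUnit M) ∧ T.card ≤ d + 2 ∧
      V ≤ Submodule.span (ZMod 2) (T : Set (Matrix (Fin r) (Fin r) (ZMod 2))) := by
  classical
  obtain ⟨S, hS⟩ := exists_good_shift r d V hV
  obtain ⟨A, B, hA, hB, hABspan⟩ := mem_span_pair_units r S
  -- extract an independent spanning subset of the good set
  obtain ⟨s, hsub, hspan, hind⟩ :=
    exists_linearIndependent (ZMod 2) {g : MatF2 r | g ∈ V ∧ IsUnit (S + g)}
  have hsfin : s.Finite := Set.toFinite s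
  letI : Fintype s := hsfin.fintype
  have hVle : V ≤ Submodule.span (ZMod 2) s := by rw [hspan]; exact hS
  have hsle : Submodule.span (ZMod 2) s ≤ V := by
    rw [Submodule.span_le]
    intro g hg
    exact (hsub hg).1
  have hspanV : Submodule.span (ZMod 2) s = V := le_antisymm hsle hVle
  have hcards : s.toFinset.card = d := by
    rw [← finrank_span_set_eq_card hind, hspanV, hV]
  -- build T
  set T : Finset (MatF2 r) := s.toFinset.image (fun g => S + g) ∪ {A, B} with hT
  refine ⟨T, ?_, ?_, ?_⟩
  · intro M hM
    rw [hT, Finset.mem_union] at hM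
    rcases hM with hM | hM
    · obtain ⟨g, hg, rfl⟩ := Finset.mem_image.mp hM
      rw [Set.mem_toFinset] at hg
      exact (hsub hg).2
    · rcases Finset.mem_insert.mp hM with rfl | hM
      · exact hA
      · rw [Finset.mem_singleton.mp hM]
        exact hB
  · calc T.card ≤ (s.toFinset.image (fun g => S + g)).card + ({A, B} : Finset _).card :=
        Finset.card_union_le _ _
      _ ≤ d + 2 := by
        have h1 : (s.toFinset.image (fun g => S + g)).card ≤ d := by
          rw [← hcards]
          exact Finset.card_image_le
        have h2 : ({A, B} : Finset (MatF2 r)).card ≤ 2 := by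
          apply le_trans (Finset.card_insert_le _ _)
          simp
        omega
  · have hSpanT : S ∈ Submodule.span (ZMod 2) (T : Set (MatF2 r)) := by
      apply Submodule.span_le.mpr ?_ hABspan
      intro x hx
      apply Submodule.subset_span
      rw [hT]
      simp only [Finset.coe_union, Set.mem_union]
      right
      simpa using hx
    rw [← hspanV, Submodule.span_le]
    intro g hg
    have hSg : S + g ∈ Submodule.span (ZMod 2) (T : Set (MatF2 r)) := by
      apply Submodule.subset_span
      rw [hT]
      simp only [Finset.coe_union, Set.mem_union]
      left
      simp only [Finset.coe_image, Set.mem_image]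
      exact ⟨g, Set.mem_toFinset.mpr hg, rfl⟩
    have hgrw : g = S + (S + g) := (mat_cancel S g).symm
    rw [SetLike.mem_coe, hgrw]
    exact Submodule.add_mem _ hSpanT hSg
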